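/- One-step expected-decrease estimate for the stochastic proximal point algorithm: Let (S, 𝒮, μ) be a probability space and f : ℝ^d × S → ℝ with f(·, ξ) convex for each ξ and f(x, ·) measurable and μ-integrable for each x; set F(x) := ∫_S f(x, ξ) dμ(ξ). Assume there exist p ∈ ℝ^d and L ∈ L²(μ), L(ξ) > 0, such that f(u, ξ) − f(v, ξ) ≤ L(ξ)(1 + ‖u − p‖)‖u − v‖ for all u, v ∈ ℝ^d and all ξ ∈ S. Fix λ > 0, x ∈ ℝ^d, and for ξ ∈ S let J_λ^ξ x denote the unique minimizer of y ↦ f(y, ξ) + (1/(2λ))‖x − y‖². Then for every y ∈ ℝ^d there exists a constant C > 0 (depending only on y and p) such that ∫_S ‖J_λ^ξ x − y‖² dμ(ξ) ≤ (1 + 2Cλ²∫_S L(ξ)² dμ(ξ)) ‖x − y‖² − 2λ (F(x) − F(y)) + 2Cλ²∫_S L(ξ)² dμ(ξ). -/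

import Mathlib

open MeasureTheory

lemma prox_ineq_aux {E : Type*} [NormedAddCommGroup E] [InnerProductSpace ℝ E]
    (g : E → ℝ) (hg : ConvexOn ℝ Set.univ g) {lam : ℝ} (hlam : 0 < lam)
    (x z : E)
    (hz : ∀ w : E, g z + (1 / (2 * lam)) * ‖x - z‖ ^ 2
        ≤ g w + (1 / (2 * lam)) * ‖x - w‖ ^ 2)
    (y : E) :
    ‖z - y‖ ^ 2 ≤ ‖x - y‖ ^ 2 - ‖x - z‖ ^ 2 + 2 * lam * (g y - g z) := by
  set a : ℝ := inner ℝ (x - z) (y - z) with ha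
  set b : ℝ := ‖y - z‖ ^ 2 with hb
  have hbnn : 0 ≤ b := by positivity
  have key : ∀ t : ℝ, 0 < t → t ≤ 1 →
      lam * (g z - g y) + a ≤ t * b / 2 := by
    intro t ht ht1
    set yt : E := (1 - t) • z + t • y with hyt
    have h1 : g yt ≤ (1 - t) * g z + t * g y :=
      hg.2 (Set.mem_univ z) (Set.mem_univ y) (by linarith) ht.le (by ring)
    have h2 := hz yt
    have hx : x - yt = (x - z) - t • (y - z) := by
      rw [hyt]; module
    have hn : ‖x - yt‖ ^ 2 = ‖x - z‖ ^ 2 - 2 * (t * a) + t ^ 2 * b := by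
      rw [hx]
      rw [norm_sub_sq_real, real_inner_smul_right, norm_smul, ha, hb]
      rw [Real.norm_eq_abs, abs_of_pos ht]
      ring
    rw [hn] at h2
    have h3 : t * g z - t * g y ≤ (1 / (2 * lam)) * (- (2 * (t * a)) + t ^ 2 * b) := by
      nlinarith [h1, h2]
    have h4 : lam * (t * g z - t * g y) ≤ (- (2 * (t * a)) + t ^ 2 * b) / 2 := by
      have := mul_le_mul_of_nonneg_left h3 hlam.le
      have hl : lam * ((1 / (2 * lam)) * (- (2 * (t * a)) + t ^ 2 * b))
          = (- (2 * (t * a)) + t ^ 2 * b) / 2 := by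
        field_simp
      linarith [hl ▸ this]
    have h5 : t * (lam * (g z - g y) + a) ≤ t * (t * b / 2) := by nlinarith
    exact le_of_mul_le_mul_left h5 ht
  have key2 : lam * (g z - g y) + a ≤ 0 := by
    have : ∀ ε : ℝ, 0 < ε → lam * (g z - g y) + a ≤ 0 + ε := by
      intro ε hε
      rcases eq_or_lt_of_le hbnn with hb0 | hbpos
      · have := key 1 one_pos le_rfl
        rw [← hb0] at this; linarith
      · set t := min 1 (2 * ε / b) with htdef
        have ht : 0 < t := lt_min one_pos (by positivity)
        have ht1 : t ≤ 1 := min_le_left _ _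
        have htb : t * b / 2 ≤ ε := by
          have : t ≤ 2 * ε / b := min_le_right _ _
          calc t * b / 2 ≤ (2 * ε / b) * b / 2 := by
                have := mul_le_mul_of_nonneg_right this hbnn
                linarith
            _ = ε := by field_simp
        linarith [key t ht ht1]
    linarith [le_of_forall_pos_le_add this]
  have hexp : ‖z - y‖ ^ 2 = ‖x - y‖ ^ 2 - ‖x - z‖ ^ 2 + 2 * a := by
    have h : x - y = (x - z) + (z - y) := by abel
    rw [h, norm_add_sq_real]
    have : (inner ℝ (x - z) (z - y) : ℝ) = - a := by
      rw [ha, ← inner_neg_right]; congr 1; abel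
    rw [this]; ring
  linarith [hexp, key2]

open MeasureTheory

theorem sppa_one_step_estimate {d : ℕ}
    {S : Type*} [MeasurableSpace S] (μ : Measure S) [IsProbabilityMeasure μ]
    (f : EuclideanSpace ℝ (Fin d) → S → ℝ)
    (hconv : ∀ ξ : S, ConvexOn ℝ Set.univ fun x => f x ξ)
    (hint : ∀ x : EuclideanSpace ℝ (Fin d), Integrable (fun ξ => f x ξ) μ)
    (F : EuclideanSpace ℝ (Fin d) → ℝ) (hF : ∀ x, F x = ∫ ξ, f x ξ ∂μ)
    (p : EuclideanSpace ℝ (Fin d)) (L : S → ℝ) (hLpos : ∀ ξ, 0 < L ξ)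
    (hL2 : MemLp L 2 μ)
    (hgrowth : ∀ (u v : EuclideanSpace ℝ (Fin d)) (ξ : S),
      f u ξ - f v ξ ≤ L ξ * (1 + ‖u - p‖) * ‖u - v‖)
    (J : ℝ → EuclideanSpace ℝ (Fin d) → S → EuclideanSpace ℝ (Fin d))
    (hJ : ∀ lam : ℝ, 0 < lam → ∀ (x : EuclideanSpace ℝ (Fin d)) (ξ : S),
      ∀ y : EuclideanSpace ℝ (Fin d),
        f (J lam x ξ) ξ + (1 / (2 * lam)) * ‖x - J lam x ξ‖ ^ 2
          ≤ f y ξ + (1 / (2 * lam)) * ‖x - y‖ ^ 2) :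
    ∀ y : EuclideanSpace ℝ (Fin d), ∃ C : ℝ, 0 < C ∧
      ∀ lam : ℝ, 0 < lam → ∀ x : EuclideanSpace ℝ (Fin d),
        ∫ ξ, ‖J lam x ξ - y‖ ^ 2 ∂μ ≤
          (1 + 2 * C * lam ^ 2 * ∫ ξ, L ξ ^ 2 ∂μ) * ‖x - y‖ ^ 2
            - 2 * lam * (F x - F y) + 2 * C * lam ^ 2 * ∫ ξ, L ξ ^ 2 ∂μ := by
  intro y
  refine ⟨(1 + ‖y - p‖) ^ 2, by positivity, ?_⟩
  set C : ℝ := (1 + ‖y - p‖) ^ 2 with hCdef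
  intro lam hlam x
  have hL2sq : Integrable (fun ξ => L ξ ^ 2) μ := by
    have := hL2.integrable_sq
    simpa [pow_two] using this
  set g : S → ℝ := fun ξ =>
    ‖x - y‖ ^ 2 + (2 * C * lam ^ 2 * (‖x - y‖ ^ 2 + 1)) * L ξ ^ 2
      - 2 * lam * (f x ξ - f y ξ) with hgdef
  have hgInt : Integrable g μ := by
    apply Integrable.sub
    · exact (integrable_const _).add (hL2sq.const_mul _)
    · exact ((hint x).sub (hint y)).const_mul _
  have hpt : ∀ ξ : S, ‖J lam x ξ - y‖ ^ 2 ≤ g ξ := by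
    intro ξ
    set z := J lam x ξ with hz
    have h1 : ‖z - y‖ ^ 2 ≤ ‖x - y‖ ^ 2 - ‖x - z‖ ^ 2 + 2 * lam * (f y ξ - f z ξ) :=
      prox_ineq_aux (fun w => f w ξ) (hconv ξ) hlam x z (fun w => hJ lam hlam x ξ w) y
    have h2 : f x ξ - f z ξ ≤ L ξ * (1 + ‖x - p‖) * ‖x - z‖ := hgrowth x z ξ
    have h3 : ‖x - p‖ ≤ ‖x - y‖ + ‖y - p‖ := by
      have := norm_add_le (x - y) (y - p)
      simpa [sub_add_sub_cancel] using this
    set s := ‖x - z‖ with hs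
    set A := 1 + ‖x - p‖ with hA
    have hsnn : 0 ≤ s := norm_nonneg _
    have hAnn : 0 ≤ A := by positivity
    have hLnn : 0 ≤ L ξ := (hLpos ξ).le
    have young : 2 * lam * (L ξ) * A * s - s ^ 2 ≤ lam ^ 2 * (L ξ) ^ 2 * A ^ 2 := by
      nlinarith [sq_nonneg (s - lam * L ξ * A)]
    have hAb : A ^ 2 ≤ 2 * C * (‖x - y‖ ^ 2 + 1) := by
      have hC1 : 1 ≤ C := by nlinarith [norm_nonneg (y - p)]
      nlinarith [h3, sq_nonneg (1 + ‖y - p‖ - ‖x - y‖), norm_nonneg (x - y),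
        norm_nonneg (y - p)]
    have hAb2 : lam ^ 2 * (L ξ) ^ 2 * A ^ 2
        ≤ lam ^ 2 * (L ξ) ^ 2 * (2 * C * (‖x - y‖ ^ 2 + 1)) :=
      mul_le_mul_of_nonneg_left hAb (by positivity)
    have hgval : g ξ = ‖x - y‖ ^ 2 + (2 * C * lam ^ 2 * (‖x - y‖ ^ 2 + 1)) * L ξ ^ 2
        - 2 * lam * (f x ξ - f y ξ) := rfl
    rw [hgval]
    nlinarith [h1, mul_le_mul_of_nonneg_left h2 (by linarith : (0:ℝ) ≤ 2 * lam),
      young, hAb2]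
  have hIg : ∫ ξ, g ξ ∂μ =
      (1 + 2 * C * lam ^ 2 * ∫ ξ, L ξ ^ 2 ∂μ) * ‖x - y‖ ^ 2
        - 2 * lam * (F x - F y) + 2 * C * lam ^ 2 * ∫ ξ, L ξ ^ 2 ∂μ := by
    have e1 : ∫ ξ, g ξ ∂μ =
        (∫ ξ, (‖x - y‖ ^ 2 + (2 * C * lam ^ 2 * (‖x - y‖ ^ 2 + 1)) * L ξ ^ 2) ∂μ)
          - ∫ ξ, 2 * lam * (f x ξ - f y ξ) ∂μ := by
      exact integral_sub ((integrable_const _).add (hL2sq.const_mul _))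
        (((hint x).sub (hint y)).const_mul _)
    rw [e1]
    rw [integral_add (integrable_const _) (hL2sq.const_mul _),
      integral_const, integral_const_mul, integral_const_mul,
      integral_sub (hint x) (hint y), hF x, hF y]
    simp [measure_univ]
    ring
  by_cases hI : Integrable (fun ξ => ‖J lam x ξ - y‖ ^ 2) μ
  · calc ∫ ξ, ‖J lam x ξ - y‖ ^ 2 ∂μ ≤ ∫ ξ, g ξ ∂μ :=
        integral_mono hI hgInt hpt
      _ = _ := hIg
  · rw [integral_undef hI, ← hIg]
    exact integral_nonneg fun ξ => le_trans (by positivity) (hpt ξ)
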